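/- Let Z be a finite set of integers with 0 ∈ Z. Let h be an entropy conservative two-point flux with respect to entropy variables v and potential ψ, with associated numerical entropy flux H. Let A, B : Z × Z → ℝ satisfy: A_{lm} = B_{lm} whenever l ≠ 0 and m ≠ 0, and ∑_{l,m ∈ Z} A_{lm} = ∑_{l,m ∈ Z} B_{lm}. Then for every family of states u : Z → E, the entropy conservation identity holds: ⟨v(u_0), ∑_{l,m ∈ Z} A_{lm} h(u_l, u_m) − ∑_{l,m ∈ Z} B_{lm} h(u_l, u_m)⟩ = ∑_{l,m ∈ Z} A_{lm} H(u_l, u_m) − ∑_{l,m ∈ Z} B_{lm} H(u_l, u_m). In particular, the pair of linear combination fluxes defined by A and B is entropy conservative with associated entropy fluxes given by the same linear combinations of H. -/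
import Mathlib


open RealInnerProductSpace

/-- Entropy conservation for a pair of linear combination fluxes: if `h` is an entropy
conservative two-point flux with numerical entropy flux `H`, and the coefficient
matrices `A`, `B` agree off the row and column of index `0` and have the same total sum,
then `⟨v(u_0), ∑ A_{lm} h(u_l,u_m) − ∑ B_{lm} h(u_l,u_m)⟩
  = ∑ A_{lm} H(u_l,u_m) − ∑ B_{lm} H(u_l,u_m)`. -/
theorem linear_combination_flux_entropy_conservation
    (N : ℕ) (hN : 1 ≤ N)
    (Z : Finset ℤ) (h0 : (0 : ℤ) ∈ Z)
    (h : EuclideanSpace ℝ (Fin N) × EuclideanSpace ℝ (Fin N) → EuclideanSpace ℝ (Fin N))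
    (v : EuclideanSpace ℝ (Fin N) → EuclideanSpace ℝ (Fin N))
    (ψ : EuclideanSpace ℝ (Fin N) → ℝ)
    (hEC : ∀ a b, ⟪v b - v a, h (a, b)⟫ = ψ b - ψ a)
    (H : EuclideanSpace ℝ (Fin N) → EuclideanSpace ℝ (Fin N) → ℝ)
    (hH : ∀ a b, H a b = (1 / 2) * ⟪v a + v b, h (a, b)⟫ - (1 / 2) * (ψ a + ψ b))
    (A B : ℤ → ℤ → ℝ)
    (hAB : ∀ l m : ℤ, l ≠ 0 → m ≠ 0 → A l m = B l m)
    (hsum : ∑ l ∈ Z, ∑ m ∈ Z, A l m = ∑ l ∈ Z, ∑ m ∈ Z, B l m) :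
    ∀ u : ℤ → EuclideanSpace ℝ (Fin N),
      ⟪v (u 0),
          (∑ l ∈ Z, ∑ m ∈ Z, A l m • h (u l, u m))
            - (∑ l ∈ Z, ∑ m ∈ Z, B l m • h (u l, u m))⟫
        = (∑ l ∈ Z, ∑ m ∈ Z, A l m * H (u l) (u m))
            - (∑ l ∈ Z, ∑ m ∈ Z, B l m * H (u l) (u m)) := by
  intro u
  have key : ∀ l m : ℤ,
      (A l m - B l m) * ⟪v (u 0), h (u l, u m)⟫
        - (A l m - B l m) * H (u l) (u m) = (A l m - B l m) * ψ (u 0) := by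
    intro l m
    by_cases hl : l = 0
    · subst hl
      rw [hH]
      have h1 := hEC (u 0) (u m)
      rw [inner_sub_left] at h1
      have h2 : ⟪v (u 0), h (u 0, u m)⟫
          = ⟪v (u m), h (u 0, u m)⟫ - (ψ (u m) - ψ (u 0)) := by
        rw [← h1]; ring
      rw [inner_add_left, h2]; ring
    · by_cases hm : m = 0
      · subst hm
        rw [hH]
        have h1 := hEC (u l) (u 0)
        rw [inner_sub_left] at h1
        have h2 : ⟪v (u 0), h (u l, u 0)⟫
            = ⟪v (u l), h (u l, u 0)⟫ + (ψ (u 0) - ψ (u l)) := by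
          rw [← h1]; ring
        rw [inner_add_left, h2]; ring
      · rw [hAB l m hl hm]; ring
  have lhs : ⟪v (u 0),
      (∑ l ∈ Z, ∑ m ∈ Z, A l m • h (u l, u m))
        - ∑ l ∈ Z, ∑ m ∈ Z, B l m • h (u l, u m)⟫
      = ∑ l ∈ Z, ∑ m ∈ Z, (A l m - B l m) * ⟪v (u 0), h (u l, u m)⟫ := by
    rw [inner_sub_right]
    simp only [inner_sum, inner_smul_right]
    rw [← Finset.sum_sub_distrib]
    refine Finset.sum_congr rfl fun l _ => ?_
    rw [← Finset.sum_sub_distrib]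
    exact Finset.sum_congr rfl fun m _ => by ring
  rw [lhs]
  have main : ∑ l ∈ Z, ∑ m ∈ Z,
      ((A l m - B l m) * ⟪v (u 0), h (u l, u m)⟫ - (A l m - B l m) * H (u l) (u m))
      = 0 := by
    calc ∑ l ∈ Z, ∑ m ∈ Z,
        ((A l m - B l m) * ⟪v (u 0), h (u l, u m)⟫ - (A l m - B l m) * H (u l) (u m))
        = ∑ l ∈ Z, ∑ m ∈ Z, (A l m - B l m) * ψ (u 0) :=
          Finset.sum_congr rfl fun l _ => Finset.sum_congr rfl fun m _ => key l m
      _ = (∑ l ∈ Z, ∑ m ∈ Z, (A l m - B l m)) * ψ (u 0) := by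
          rw [Finset.sum_mul]
          exact Finset.sum_congr rfl fun l _ => by rw [Finset.sum_mul]
      _ = 0 := by
          have : ∑ l ∈ Z, ∑ m ∈ Z, (A l m - B l m) = 0 := by
            simp only [Finset.sum_sub_distrib]
            rw [hsum]; ring
          rw [this, zero_mul]
  have expand : ∑ l ∈ Z, ∑ m ∈ Z,
      ((A l m - B l m) * ⟪v (u 0), h (u l, u m)⟫ - (A l m - B l m) * H (u l) (u m))
      = (∑ l ∈ Z, ∑ m ∈ Z, (A l m - B l m) * ⟪v (u 0), h (u l, u m)⟫)
        - ((∑ l ∈ Z, ∑ m ∈ Z, A l m * H (u l) (u m))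
            - ∑ l ∈ Z, ∑ m ∈ Z, B l m * H (u l) (u m)) := by
    simp only [Finset.sum_sub_distrib, sub_mul]
  linarith [main, expand]
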